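/- In every finite sequential game, every Subgame Perfect Equilibrium is a terminal profile of the SI-dynamics: if s* is an SPE then there is no s' with s* ⇀_{SI} s'. -/

import Mathlib

namespace SeqGame

inductive GameTree (N O : Type) : Type where
  | leaf (o : O) : GameTree N O
  | node (i : N) (children : List (GameTree N O)) : GameTree N O

namespace GameTree

variable {N O : Type}

/-- The subtree of `T` at position `p` (a list of child indices), if it exists. -/
def subtree : GameTree N O → List ℕ → Option (GameTree N O)
  | t, [] => some t
  | leaf _, _ :: _ => none
  | node _ c, k :: p =>
    match getElem? c k with
    | some t => subtree t p
    | none => none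

/-- A strategy profile: a choice of a child index at every position. -/
abbrev Profile := List ℕ → ℕ

/-- A profile is legal if it chooses an existing child at every internal node. -/
def Legal (T : GameTree N O) (s : Profile) : Prop :=
  ∀ p i c, T.subtree p = some (node i c) → s p < c.length

/-- The profiles `s` and `s'` differ at the (valid, internal) node `p`. -/
def Differs (T : GameTree N O) (s s' : Profile) (p : List ℕ) : Prop :=
  (∃ i c, T.subtree p = some (node i c)) ∧ s p ≠ s' p

/-- The outcome reached when playing according to the profile `s`. -/
def outcome : GameTree N O → Profile → Option O
  | leaf o, _ => some o
  | node _ c, s =>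
    match h : getElem? c (s []) with
    | some t => outcome t (fun p => s (s [] :: p))
    | none => none
decreasing_by
  have hm : t ∈ c := by
    exact List.mem_of_getElem? h
  have := List.sizeOf_lt_of_mem hm
  simp only [node.sizeOf_spec]
  omega

/-- The profile `s` re-rooted at position `p`. -/
def shift (s : Profile) (p : List ℕ) : Profile := fun q => s (p ++ q)

/-- The owner of the node at position `p`, if it is internal. -/
def ownerAt (T : GameTree N O) (p : List ℕ) : Option N :=
  match T.subtree p with
  | some (node i _) => some i
  | _ => none

/-- `p` lies along the play induced by `s`. -/
def OnPlay (s : Profile) (p : List ℕ) : Prop :=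
  ∀ q k, (q ++ [k]) <+: p → s q = k

/-- Improvement property: every player who changes strictly improves the outcome. -/
def Iprop (T : GameTree N O) (pref : N → O → O → Prop) (s s' : Profile) : Prop :=
  ∀ p i c, T.subtree p = some (node i c) → s p ≠ s' p →
    ∃ x y, T.outcome s = some x ∧ T.outcome s' = some y ∧ pref i x y

/-- Subgame improvement property. -/
def SIprop (T : GameTree N O) (pref : N → O → O → Prop) (s s' : Profile) : Prop :=
  ∀ p i c, T.subtree p = some (node i c) → s p ≠ s' p →
    ∃ x y, outcome (node i c) (shift s p) = some x ∧
      outcome (node i c) (shift s' p) = some y ∧ pref i x y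

/-- Laziness property: all changed nodes lie along the play induced by `s'`. -/
def Lprop (T : GameTree N O) (s s' : Profile) : Prop :=
  ∀ p, Differs T s s' p → OnPlay s' p

/-- One player property: at most one player changes his strategy. -/
def P1prop (T : GameTree N O) (s s' : Profile) : Prop :=
  ∃ i : N, ∀ p, Differs T s s' p → T.ownerAt p = some i

/-- Atomicity property: at most one node changes. -/
def Aprop (T : GameTree N O) (s s' : Profile) : Prop :=
  ∀ p q, Differs T s s' p → Differs T s s' q → p = q

/-- Names of the update properties. -/
inductive Upd : Type | I | SI | L | P1 | A
deriving DecidableEq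

/-- Interpretation of an update property name. -/
def holds (T : GameTree N O) (pref : N → O → O → Prop) : Upd → Profile → Profile → Prop
  | .I => Iprop T pref
  | .SI => SIprop T pref
  | .L => Lprop T
  | .P1 => P1prop T
  | .A => Aprop T

/-- The X-dynamics: an actual update (between legal profiles) satisfying
all properties in `X`. -/
def XDyn (X : Set Upd) (T : GameTree N O) (pref : N → O → O → Prop)
    (s s' : Profile) : Prop :=
  Legal T s ∧ Legal T s' ∧ (∃ p, Differs T s s' p) ∧ ∀ u ∈ X, holds T pref u s s'

/-- A dynamics terminates iff there is no infinite update sequence. -/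
def Terminates (D : Profile → Profile → Prop) : Prop :=
  ¬ ∃ f : ℕ → Profile, ∀ n, D (f n) (f (n + 1))

/-- `s'` is a deviation from `s` by the coalition `I`. -/
def Deviation (T : GameTree N O) (I : Set N) (s s' : Profile) : Prop :=
  Legal T s' ∧ ∀ p i c, T.subtree p = some (node i c) → i ∉ I → s p = s' p

/-- Nash equilibrium. -/
def IsNE (T : GameTree N O) (pref : N → O → O → Prop) (s : Profile) : Prop :=
  ∀ i s', Deviation T {i} s s' →
    ∀ x y, T.outcome s = some x → T.outcome s' = some y → ¬ pref i x y

/-- Subgame perfect equilibrium: an NE in every subgame. -/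
def IsSPE (T : GameTree N O) (pref : N → O → O → Prop) (s : Profile) : Prop :=
  ∀ p t, T.subtree p = some t → IsNE t pref (shift s p)

/-- Strong Nash equilibrium (Aumann). -/
def IsSNE (T : GameTree N O) (pref : N → O → O → Prop) (s : Profile) : Prop :=
  ∀ I : Set N, I.Nonempty → ∀ s', Deviation T I s s' →
    ∃ i ∈ I, ∀ x y, T.outcome s = some x → T.outcome s' = some y → ¬ pref i x y

/-- A relation is acyclic if it has no cycle. -/
def Acyclic (r : O → O → Prop) : Prop := ∀ x, ¬ Relation.TransGen r x x

/-- Incomparability. -/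
def Incomp (r : O → O → Prop) (x y : O) : Prop := ¬ r x y ∧ ¬ r y x

/-- Strict weak order: irreflexive, transitive, with transitive incomparability. -/
def IsSWO (r : O → O → Prop) : Prop :=
  (∀ x, ¬ r x x) ∧ (∀ x y z, r x y → r y z → r x z) ∧
    (∀ x y z, Incomp r x y → Incomp r y z → Incomp r x z)

/-- Strict linear order: irreflexive, transitive and total. -/
def IsSLO (r : O → O → Prop) : Prop :=
  (∀ x, ¬ r x x) ∧ (∀ x y z, r x y → r y z → r x z) ∧
    (∀ x y, x ≠ y → r x y ∨ r y x)

/-- Absence of the main pattern. -/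
def OutOfMainPattern (pref : N → O → O → Prop) : Prop :=
  ∀ (i j : N) (x y z : O),
    ¬ (pref i x y ∧ pref i y z ∧ pref j y z ∧ pref j z x)

/-- Absence of the secondary pattern. -/
def OutOfSecondaryPattern (pref : N → O → O → Prop) : Prop :=
  ∀ (i j : N) (w x y z : O),
    ¬ (pref i w x ∧ pref i x y ∧ pref i y z ∧
       Incomp (pref j) x z ∧ pref j z w ∧ Incomp (pref j) w y)

/-- Absence of both patterns. -/
def OutOfPattern (pref : N → O → O → Prop) : Prop :=
  OutOfMainPattern pref ∧ OutOfSecondaryPattern pref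

/-- The preferences can be layered: there is an ordered partition of the
outcomes (given by a layer-index function) such that higher layers are
unanimously weakly preferred, and within a layer no two players agree on
one pair while disagreeing on another pair. -/
def CanBeLayered (pref : N → O → O → Prop) : Prop :=
  ∃ ℓ : O → ℕ,
    (∀ x y, ℓ x < ℓ y → ∀ i, ¬ pref i y x) ∧
    (∀ (i j : N) (w x y z : O), ℓ w = ℓ x → ℓ x = ℓ y → ℓ y = ℓ z →
      ¬ (pref i x y ∧ pref j x y ∧ pref i w z ∧ pref j z w))

end GameTree
end SeqGame

open SeqGame GameTree

lemma aux_subtree_append {N O : Type} (p q : List ℕ) (T : GameTree N O) :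
    T.subtree (p ++ q) = (T.subtree p).bind (fun t => t.subtree q) := by
  induction p generalizing T with
  | nil => simp [subtree]
  | cons k p ih =>
    cases T with
    | leaf o => simp [subtree]
    | node i c =>
      simp only [List.cons_append, subtree]
      cases h : getElem? c k with
      | none => simp
      | some t => simpa using ih t

lemma aux_length_le {N O : Type} (p : List ℕ) (T t : GameTree N O)
    (h : T.subtree p = some t) : p.length ≤ sizeOf T := by
  induction p generalizing T with
  | nil => simp
  | cons k p ih =>
    cases T with
    | leaf o => simp [subtree] at h
    | node i c =>
      simp only [subtree] at h
      cases hc : getElem? c k with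
      | none => rw [hc] at h; exact absurd h (by simp)
      | some u =>
        rw [hc] at h
        have hm : u ∈ c := List.mem_of_getElem? hc
        have := List.sizeOf_lt_of_mem hm
        have := ih u h
        simp only [List.length_cons, GameTree.node.sizeOf_spec]
        omega

/-- Every subgame perfect equilibrium is a terminal profile of the SI-dynamics. -/
theorem stmt_3 {N O : Type} (T : GameTree N O) (pref : N → O → O → Prop)
    (s : Profile) (hs : Legal T s) (hspe : IsSPE T pref s) :
    ∀ s', ¬ XDyn {Upd.SI} T pref s s' := by
  intro s' hX
  obtain ⟨_, hleg', ⟨p0, hd0⟩, hprop⟩ := hX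
  have hSI : SIprop T pref s s' := hprop Upd.SI rfl
  -- the set of lengths of changed nodes
  set A : Set ℕ := {n | ∃ p, Differs T s s' p ∧ p.length = n} with hA
  have hAne : A.Nonempty := ⟨p0.length, p0, hd0, rfl⟩
  have hAbdd : BddAbove A := by
    refine ⟨sizeOf T, ?_⟩
    rintro n ⟨p, ⟨⟨i, c, hsub⟩, _⟩, rfl⟩
    exact aux_length_le p T _ hsub
  have hmem : sSup A ∈ A := Nat.sSup_mem hAne hAbdd
  obtain ⟨p, hd, hlen⟩ := hmem
  obtain ⟨⟨i, c, hsub⟩, hne⟩ := hd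
  -- maximality: no changed node strictly deeper
  have hmax : ∀ q, Differs T s s' q → q.length ≤ p.length := by
    intro q hq
    rw [hlen]
    exact le_csSup hAbdd ⟨q, hq, rfl⟩
  -- SPE gives NE in the subgame at p
  have hNE : IsNE (node i c) pref (shift s p) := hspe p _ hsub
  -- shift s' p is a deviation by {i}
  have hdev : Deviation (node i c) {i} (shift s p) (shift s' p) := by
    constructor
    · intro q j d hq
      have : T.subtree (p ++ q) = some (node j d) := by
        rw [aux_subtree_append, hsub]; exact hq
      exact hleg' _ _ _ this
    · intro q j d hq hj
      cases q with
      | nil =>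
        simp only [subtree, Option.some.injEq, GameTree.node.injEq] at hq
        exact absurd (Set.mem_singleton_iff.mpr hq.1.symm) hj
      | cons k q' =>
        have hsubq : T.subtree (p ++ (k :: q')) = some (node j d) := by
          rw [aux_subtree_append, hsub]; exact hq
        by_contra hneq
        have hdq : Differs T s s' (p ++ (k :: q')) :=
          ⟨⟨j, d, hsubq⟩, hneq⟩
        have := hmax _ hdq
        simp at this
  obtain ⟨x, y, hx, hy, hpref⟩ := hSI p i c hsub hne
  exact hNE i (shift s' p) hdev x y hx hy hpref
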